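/- Let $T$ be a rooted tree and $B \geq 1$ a block size. Define a layout as a function $L : V(T) \to \{0,1,\dots,|V(T)|\}$ with at most $B$ vertices mapped to each block, where block $0$ may hold at most $k$ vertices; the cost of a root-to-leaf path $P$ is the number of distinct nonzero blocks among $\{L(v) : v \in P\}$, and $c(T,k)$ is the minimum over layouts of the maximum path cost. Then $c(T,k)$ is non-increasing in $k$, and for any $k_1, k_2 \in \{0,\dots,B\}$, $|c(T,k_1) - c(T,k_2)| \leq 1$. -/

import Mathlib

/-! Model of rooted trees, memory layouts into blocks, and the
worst-case root-to-leaf I/O cost `layoutCost t B k` (minimum over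
layouts with at most `B` vertices per nonzero block and at most `k`
vertices in the free block `0`, of the maximum over root-to-leaf paths
of the number of distinct nonzero blocks on the path).
Vertices are addressed by their list of child indices from the root. -/

inductive RTree : Type where
  | node : List RTree → RTree

namespace RTree

mutual
  /-- Addresses of all vertices of the tree. The root has address `[]`. -/
  def verts : RTree → List (List ℕ)
    | .node ts => [] :: vertsAux 0 ts
  def vertsAux : ℕ → List RTree → List (List ℕ)
    | _, [] => []
    | i, t :: ts => (t.verts.map (i :: ·)) ++ vertsAux (i + 1) ts
end

mutual
  /-- Addresses of all leaves; a root-to-leaf path consists of all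
  prefixes (`List.inits`) of a leaf address. -/
  def paths : RTree → List (List ℕ)
    | .node [] => [[]]
    | .node (t :: ts) => pathsAux 0 (t :: ts)
  def pathsAux : ℕ → List RTree → List (List ℕ)
    | _, [] => []
    | i, t :: ts => (t.paths.map (i :: ·)) ++ pathsAux (i + 1) ts
end

end RTree

/-- Number of vertices of `t` that layout `L` assigns to block `b`. -/
def blockCount (t : RTree) (L : List ℕ → ℕ) (b : ℕ) : ℕ :=
  (t.verts.filter (fun v => L v = b)).length

/-- `L` is a valid layout of `t` with block size `B` and at most `k`
vertices in the free block `0`. -/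
def okLayout (t : RTree) (B k : ℕ) (L : List ℕ → ℕ) : Prop :=
  (∀ v ∈ t.verts, L v ≤ t.verts.length) ∧
  (∀ b : ℕ, b ≠ 0 → blockCount t L b ≤ B) ∧
  blockCount t L 0 ≤ k

/-- Cost of the root-to-leaf path ending at leaf address `p`: the number
of distinct nonzero blocks among the vertices on the path. -/
def pathCost (L : List ℕ → ℕ) (p : List ℕ) : ℕ :=
  (((p.inits.map L).dedup).filter (fun b => b ≠ 0)).length

/-- Worst-case cost of layout `L` on tree `t`. -/
def maxCost (t : RTree) (L : List ℕ → ℕ) : ℕ :=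
  (t.paths.map (pathCost L)).foldr max 0

/-- `c(T,k)`: worst-case optimal I/O cost of `t` with block size `B` and
`k` free slots in block `0`. -/
noncomputable def layoutCost (t : RTree) (B k : ℕ) : ℕ :=
  sInf {m : ℕ | ∃ L : List ℕ → ℕ, okLayout t B k L ∧ maxCost t L = m}

/-! ### Auxiliary lemmas -/

mutual
theorem aux_verts_nodup : (t : RTree) → t.verts.Nodup
  | .node ts => by
    rw [RTree.verts]
    refine List.nodup_cons.mpr ⟨fun h => ?_, (aux_vertsAux_nodup 0 ts).1⟩
    obtain ⟨j, _, w, hw⟩ := (aux_vertsAux_nodup 0 ts).2 _ h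
    cases hw
theorem aux_vertsAux_nodup : (i : ℕ) → (ts : List RTree) →
    (RTree.vertsAux i ts).Nodup ∧
      ∀ v ∈ RTree.vertsAux i ts, ∃ j, i ≤ j ∧ ∃ w, v = j :: w
  | i, [] => by simp [RTree.vertsAux]
  | i, t :: ts => by
    rw [RTree.vertsAux]
    have h1 := aux_verts_nodup t
    have h2 := aux_vertsAux_nodup (i+1) ts
    constructor
    · refine (List.nodup_append).mpr ⟨?_, h2.1, ?_⟩
      · exact h1.map (fun a b h => by simpa using h)
      · intro v hv v2 hv2 hvv; subst hvv
        obtain ⟨j, hj, w, hw⟩ := h2.2 v hv2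
        obtain ⟨w', _, rfl⟩ := List.mem_map.mp hv
        rw [List.cons.injEq] at hw
        omega
    · intro v hv
      rcases List.mem_append.mp hv with h | h
      · obtain ⟨w', _, rfl⟩ := List.mem_map.mp h
        exact ⟨i, le_refl _, w', rfl⟩
      · obtain ⟨j, hj, w, hw⟩ := h2.2 v h
        exact ⟨j, by omega, w, hw⟩
end

theorem aux_countP_sum {α : Type*} (l : List α) (f : α → ℕ) (s : Finset ℕ) :
    ∑ b ∈ s, l.countP (fun a => f a = b) = l.countP (fun a => f a ∈ s) := by
  induction l with
  | nil => simp
  | cons a l ih =>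
    simp only [List.countP_cons, Finset.sum_add_distrib, ih, decide_eq_true_eq]
    congr 1
    by_cases h : f a ∈ s
    · rw [if_pos h, Finset.sum_eq_single_of_mem (f a) h (by intro b hb hne; simp [Ne.symm hne])]
      simp
    · rw [if_neg h, Finset.sum_eq_zero]
      intro b hb
      simp only [ite_eq_right_iff]
      intro he; exact absurd (he ▸ hb) h

theorem aux_countP_or_le {α : Type*} (l : List α) (p q : α → Bool) :
    l.countP (fun a => p a || q a) ≤ l.countP p + l.countP q := by
  induction l with
  | nil => simp
  | cons a l ih =>
    simp only [List.countP_cons]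
    cases hp : p a <;> cases hq : q a <;> simp_all <;> omega

theorem aux_foldr_max_le {α : Type*} (l : List α) (f g : α → ℕ) (c : ℕ)
    (h : ∀ x ∈ l, f x ≤ g x + c) :
    (l.map f).foldr max 0 ≤ (l.map g).foldr max 0 + c := by
  induction l with
  | nil => simp
  | cons a l ih =>
    simp only [List.map_cons, List.foldr_cons]
    have h1 := h a (by simp)
    have h2 := ih (fun x hx => h x (by simp [hx]))
    omega

theorem aux_dedup_filter_relabel (l : List ℕ) (b' : ℕ) (f : ℕ → ℕ)
    (hf : ∀ x, f x = if x = 0 then b' else x) :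
    (((l.map f).dedup).filter (fun b => b ≠ 0)).length ≤
      ((l.dedup).filter (fun b => b ≠ 0)).length + 1 := by
  set d' := ((l.map f).dedup).filter (fun b => b ≠ 0) with hd'
  set d := (l.dedup).filter (fun b => b ≠ 0) with hd
  have hnd' : d'.Nodup := (l.map f).nodup_dedup.filter _
  have hnd : d.Nodup := l.nodup_dedup.filter _
  have hsub : d' ⊆ b' :: d := by
    intro x hx
    rw [hd', List.mem_filter] at hx
    obtain ⟨hx1, hx2⟩ := hx
    rw [List.mem_dedup, List.mem_map] at hx1
    obtain ⟨y, hy, rfl⟩ := hx1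
    rw [hf y]
    by_cases hy0 : y = 0
    · simp [hy0]
    · simp only [if_neg hy0]
      right
      show y ∈ List.filter _ _
      rw [List.mem_filter, List.mem_dedup]
      exact ⟨hy, by simpa using hy0⟩
  calc d'.length = d'.toFinset.card := (List.toFinset_card_of_nodup hnd').symm
    _ ≤ (b' :: d).toFinset.card := Finset.card_le_card (fun x hx => by
        rw [List.mem_toFinset] at *; exact hsub (by assumption))
    _ ≤ d.toFinset.card + 1 := by
        rw [List.toFinset_cons]; exact Finset.card_insert_le _ _
    _ = d.length + 1 := by rw [List.toFinset_card_of_nodup hnd]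

theorem aux_blockCount_countP (t : RTree) (L : List ℕ → ℕ) (b : ℕ) :
    blockCount t L b = t.verts.countP (fun v => L v = b) := by
  rw [blockCount, List.countP_eq_length_filter]

theorem aux_verts_len_pos (t : RTree) : 1 ≤ t.verts.length := by
  obtain ⟨ts⟩ := t
  rw [RTree.verts]
  simp

/-- If block `0` is nonempty, some nonzero block `≤ n` is empty. -/
theorem aux_exists_empty_block (t : RTree) (L : List ℕ → ℕ)
    (h0 : 1 ≤ blockCount t L 0) :
    ∃ b, b ≠ 0 ∧ b ≤ t.verts.length ∧ blockCount t L b = 0 := by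
  by_contra h
  push_neg at h
  set n := t.verts.length with hn
  have hall : ∀ b ∈ Finset.Icc 1 n, 1 ≤ t.verts.countP (fun v => L v = b) := by
    intro b hb
    rw [Finset.mem_Icc] at hb
    have := h b (by omega) hb.2
    rw [aux_blockCount_countP] at this
    omega
  have hsum : n ≤ ∑ b ∈ Finset.Icc 1 n, t.verts.countP (fun v => L v = b) := by
    calc n = ∑ _b ∈ Finset.Icc 1 n, 1 := by simp
      _ ≤ _ := Finset.sum_le_sum hall
  rw [aux_countP_sum] at hsum
  have h1 : t.verts.countP (fun v => L v ∈ Finset.Icc 1 n) ≤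
      t.verts.countP (fun v => !decide (L v = 0)) := by
    apply List.countP_mono_left
    intro v hv hmem
    simp only [decide_eq_true_eq, Finset.mem_Icc, Bool.not_eq_true', decide_eq_false_iff_not] at *
    omega
  have h2 : t.verts.countP (fun v => !decide (L v = 0)) +
      t.verts.countP (fun v => decide (L v = 0)) = n := by
    have h2' := List.length_eq_countP_add_countP (p := fun v => decide (L v = 0)) (l := t.verts)
    simp only [decide_not, Bool.decide_eq_true] at h2' ⊢
    omega
  rw [aux_blockCount_countP] at h0
  omega

/-- There is a valid layout placing nothing in block `0`. -/
theorem aux_exists_layout (t : RTree) (B : ℕ) (hB : 1 ≤ B) :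
    ∃ L, okLayout t B 0 L := by
  classical
  refine ⟨fun v => @List.idxOf _ instBEqOfDecidableEq v t.verts + 1, ?_, ?_, ?_⟩
  · intro v hv
    show @List.idxOf _ instBEqOfDecidableEq v t.verts + 1 ≤ t.verts.length
    have := (@List.idxOf_lt_length_iff _ instBEqOfDecidableEq _ t.verts v).mpr hv
    omega
  · intro b hb
    rw [blockCount]
    have hnd : (t.verts.filter
        (fun v => @List.idxOf _ instBEqOfDecidableEq v t.verts + 1 = b)).Nodup :=
      (aux_verts_nodup t).filter _
    have hall : ∀ x ∈ t.verts.filter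
          (fun v => @List.idxOf _ instBEqOfDecidableEq v t.verts + 1 = b),
        ∀ y ∈ t.verts.filter
          (fun v => @List.idxOf _ instBEqOfDecidableEq v t.verts + 1 = b), x = y := by
      intro x hx y hy
      rw [List.mem_filter] at hx hy
      obtain ⟨hx1, hx2⟩ := hx
      obtain ⟨hy1, hy2⟩ := hy
      simp only [decide_eq_true_eq] at hx2 hy2
      exact (@List.idxOf_inj _ instBEqOfDecidableEq _ t.verts x y hx1).mp (by omega)
    match hl : t.verts.filter
        (fun v => @List.idxOf _ instBEqOfDecidableEq v t.verts + 1 = b) with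
    | [] => simp
    | [x] => simpa using hB
    | x :: y :: r =>
      exfalso
      rw [hl] at hnd hall
      have hxy : x ≠ y := by
        have := List.nodup_cons.mp hnd
        intro he; exact this.1 (he ▸ by simp)
      exact hxy (hall x (by simp) y (by simp))
  · rw [blockCount]
    have : t.verts.filter
        (fun v => @List.idxOf _ instBEqOfDecidableEq v t.verts + 1 = 0) = [] := by
      apply List.filter_eq_nil_iff.mpr
      intro v _
      simp
    simp [this]


/-- `c(T,k)` is non-increasing in `k`, and for `k₁, k₂ ∈ {0,…,B}` the
values `c(T,k₁)` and `c(T,k₂)` differ by at most `1`. -/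
theorem stmt5 (t : RTree) (B : ℕ) (hB : 1 ≤ B) :
    (∀ k₁ k₂ : ℕ, k₁ ≤ k₂ → layoutCost t B k₂ ≤ layoutCost t B k₁) ∧
    (∀ k₁ k₂ : ℕ, k₁ ≤ B → k₂ ≤ B →
      |(layoutCost t B k₁ : ℤ) - (layoutCost t B k₂ : ℤ)| ≤ 1) := by
  classical
  set n := t.verts.length with hn
  have hok_mono : ∀ (k₁ k₂ : ℕ) (L : List ℕ → ℕ), k₁ ≤ k₂ → okLayout t B k₁ L →
      okLayout t B k₂ L := by
    rintro k₁ k₂ L hk ⟨h1, h2, h3⟩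
    exact ⟨h1, h2, le_trans h3 hk⟩
  have hne : ∀ k : ℕ, {m : ℕ | ∃ L : List ℕ → ℕ, okLayout t B k L ∧ maxCost t L = m}.Nonempty := by
    intro k
    obtain ⟨L, hL⟩ := aux_exists_layout t B hB
    exact ⟨maxCost t L, L, hok_mono 0 k L (Nat.zero_le k) hL, rfl⟩
  have hmono : ∀ k₁ k₂ : ℕ, k₁ ≤ k₂ → layoutCost t B k₂ ≤ layoutCost t B k₁ := by
    intro k₁ k₂ hk
    obtain ⟨L, hL, hM⟩ := Nat.sInf_mem (hne k₁)
    exact Nat.sInf_le ⟨L, hok_mono k₁ k₂ L hk hL, hM⟩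
  refine ⟨hmono, ?_⟩
  -- key step: c(T,0) ≤ c(T,B) + 1
  have hkey : layoutCost t B 0 ≤ layoutCost t B B + 1 := by
    obtain ⟨L, hL, hM⟩ := Nat.sInf_mem (hne B)
    -- choose a relabeling target block b'
    obtain ⟨b', hb'0, hb'n, hb'B⟩ : ∃ b', b' ≠ 0 ∧ b' ≤ n ∧
        blockCount t L b' + blockCount t L 0 ≤ B := by
      by_cases h0 : blockCount t L 0 = 0
      · exact ⟨1, one_ne_zero, aux_verts_len_pos t,
          by rw [h0]; simpa using hL.2.1 1 one_ne_zero⟩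
      · obtain ⟨b', hb1, hb2, hb3⟩ := aux_exists_empty_block t L (by omega)
        exact ⟨b', hb1, hb2, by rw [hb3]; simpa using hL.2.2⟩
    set L' : List ℕ → ℕ := fun v => if L v = 0 then b' else L v with hL'
    have hok' : okLayout t B 0 L' := by
      refine ⟨?_, ?_, ?_⟩
      · intro v hv
        simp only [hL']
        split
        · exact hb'n
        · exact hL.1 v hv
      · intro b hb
        by_cases hbb : b = b'
        · rw [hbb, aux_blockCount_countP]
          calc t.verts.countP (fun v => L' v = b')
              ≤ t.verts.countP (fun v => (decide (L v = 0) || decide (L v = b'))) := by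
                apply List.countP_mono_left
                intro v hv h
                simp only [hL', decide_eq_true_eq] at h ⊢
                by_cases h0 : L v = 0
                · simp [h0]
                · rw [if_neg h0] at h; simp [h]
            _ ≤ t.verts.countP (fun v => L v = 0) + t.verts.countP (fun v => L v = b') :=
                aux_countP_or_le _ _ _
            _ ≤ B := by
                rw [← aux_blockCount_countP, ← aux_blockCount_countP]; omega
        · have : blockCount t L' b = blockCount t L b := by
            rw [blockCount, blockCount]
            congr 1
            apply List.filter_congr
            intro v _
            simp only [hL', decide_eq_decide]
            by_cases h0 : L v = 0
            · rw [if_pos h0, h0]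
              constructor
              · intro h; exact absurd h.symm hbb
              · intro h; exact absurd h.symm hb
            · rw [if_neg h0]
          rw [this]
          exact hL.2.1 b hb
      · rw [blockCount]
        have : t.verts.filter (fun v => L' v = 0) = [] := by
          apply List.filter_eq_nil_iff.mpr
          intro v _
          simp only [hL', decide_eq_true_eq]
          split
          · exact hb'0
          · assumption
        simp [this]
    have hcost : maxCost t L' ≤ maxCost t L + 1 := by
      rw [maxCost, maxCost]
      apply aux_foldr_max_le
      intro p _
      rw [pathCost, pathCost]
      have hmap : p.inits.map L' = (p.inits.map L).map (fun x => if x = 0 then b' else x) := by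
        rw [List.map_map]
        rfl
      rw [hmap]
      exact aux_dedup_filter_relabel (p.inits.map L) b' _ (fun x => rfl)
    calc layoutCost t B 0 ≤ maxCost t L' := Nat.sInf_le ⟨L', hok', rfl⟩
      _ ≤ maxCost t L + 1 := hcost
      _ = layoutCost t B B + 1 := by rw [hM]; rfl
  intro k₁ k₂ hk₁ hk₂
  have h1 : layoutCost t B B ≤ layoutCost t B k₁ := hmono k₁ B hk₁
  have h2 : layoutCost t B B ≤ layoutCost t B k₂ := hmono k₂ B hk₂
  have h3 : layoutCost t B k₁ ≤ layoutCost t B 0 := hmono 0 k₁ (Nat.zero_le _)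
  have h4 : layoutCost t B k₂ ≤ layoutCost t B 0 := hmono 0 k₂ (Nat.zero_le _)
  rw [abs_sub_le_iff]
  constructor <;> [skip; skip] <;>
    · omega
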